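/- arXiv:1604.05954 — 3 statements merged into one kernel-verified Lean document; each statement's English description precedes it below -/
import Mathlib

section
/- Let l_1, …, l_n be primitive vectors of ℤ^r that span ℝ^r, and let τ ⊆ Sym_r(ℝ) be the cone of all nonnegative real combinations of the rank-one matrices l_1 l_1ᵀ, …, l_n l_nᵀ (so τ contains positive definite matrices). Then: (a) there is a subset S ⊆ {1,…,n} such that {l_i : i ∈ S} spans a linear subspace H of dimension exactly r−1; and (b) for any such hyperplane H, the subcone τ_H of τ generated by {l_i l_iᵀ : l_i ∈ H} is an extreme subset (face) of τ, equals {B ∈ τ : Bu = 0} where u is any nonzero vector orthogonal to H, consists entirely of matrices of rank at most r−1, and contains a matrix of rank exactly r−1. -/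
/-!
Let `l_1, …, l_n` be primitive vectors of `ℤ^r` spanning `ℝ^r` and let
`τ ⊆ Sym_r(ℝ)` be the cone of nonnegative combinations of the `l_i l_iᵀ`.
Then (a) some subset of the `l_i` spans a subspace `H` of dimension exactly `r − 1`,
and (b) for any such hyperplane `H`, the subcone `τ_H` generated by the `l_i l_iᵀ` with
`l_i ∈ H` is an extreme subset of `τ`, equals `{B ∈ τ : B u = 0}` for any nonzero `u`
orthogonal to `H`, consists of matrices of rank at most `r − 1`, and contains a matrix
of rank exactly `r − 1`.
-/

open Matrix

noncomputable section

def castVec {k : Type*} (v : k → ℤ) : k → ℝ := fun i => (v i : ℝ)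

def rankOne {k : Type*} (v : k → ℤ) : Matrix k k ℝ :=
  vecMulVec (castVec v) (castVec v)

def IsPrimitiveVec {k : Type*} [Fintype k] (v : k → ℤ) : Prop :=
  Finset.univ.gcd v = 1

namespace FaceAux

variable {r n : ℕ}

lemma rankOne_mulVec (v : Fin r → ℤ) (u : Fin r → ℝ) :
    rankOne v *ᵥ u = (castVec v ⬝ᵥ u) • castVec v := by
  funext i
  simp only [rankOne, vecMulVec, mulVec, dotProduct, Matrix.of_apply, Pi.smul_apply,
    smul_eq_mul]
  rw [Finset.sum_mul]
  exact Finset.sum_congr rfl fun j _ => by ring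

lemma sum_mulVec' {ι : Type*} (s : Finset ι) (A : ι → Matrix (Fin r) (Fin r) ℝ)
    (u : Fin r → ℝ) : (∑ i ∈ s, A i) *ᵥ u = ∑ i ∈ s, A i *ᵥ u := by
  funext j
  simp only [mulVec, dotProduct, Matrix.sum_apply, Finset.sum_apply, Finset.sum_mul]
  exact Finset.sum_comm

lemma comb_mulVec (l : Fin n → Fin r → ℤ) (c : Fin n → ℝ) (u : Fin r → ℝ) :
    (∑ i, c i • rankOne (l i)) *ᵥ u
      = ∑ i, (c i * (castVec (l i) ⬝ᵥ u)) • castVec (l i) := by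
  rw [sum_mulVec']
  refine Finset.sum_congr rfl fun i _ => ?_
  rw [Matrix.smul_mulVec, rankOne_mulVec, smul_smul]

lemma dotProduct_finsum {ι : Type*} (u : Fin r → ℝ) (s : Finset ι) (f : ι → (Fin r → ℝ)) :
    u ⬝ᵥ (∑ i ∈ s, f i) = ∑ i ∈ s, u ⬝ᵥ f i := by
  simp only [dotProduct, Finset.sum_apply, Finset.mul_sum]
  exact Finset.sum_comm

lemma comb_quad (l : Fin n → Fin r → ℤ) (c : Fin n → ℝ) (u : Fin r → ℝ) :
    u ⬝ᵥ ((∑ i, c i • rankOne (l i)) *ᵥ u) = ∑ i, c i * (castVec (l i) ⬝ᵥ u) ^ 2 := by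
  rw [comb_mulVec]
  rw [dotProduct_finsum]
  refine Finset.sum_congr rfl fun i _ => ?_
  rw [dotProduct_smul, smul_eq_mul, dotProduct_comm]
  ring

lemma comb_quad_nonneg (l : Fin n → Fin r → ℤ) (c : Fin n → ℝ) (u : Fin r → ℝ)
    (hc : ∀ i, 0 ≤ c i) :
    0 ≤ u ⬝ᵥ ((∑ i, c i • rankOne (l i)) *ᵥ u) := by
  rw [comb_quad]
  exact Finset.sum_nonneg fun i _ => mul_nonneg (hc i) (sq_nonneg _)

lemma comb_terms_zero (l : Fin n → Fin r → ℤ) (c : Fin n → ℝ) (u : Fin r → ℝ)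
    (hc : ∀ i, 0 ≤ c i)
    (h : u ⬝ᵥ ((∑ i, c i • rankOne (l i)) *ᵥ u) = 0) :
    ∀ i, c i * (castVec (l i) ⬝ᵥ u) = 0 := by
  rw [comb_quad] at h
  intro i
  have h0 : ∀ j ∈ Finset.univ, (0:ℝ) ≤ c j * (castVec (l j) ⬝ᵥ u) ^ 2 :=
    fun j _ => mul_nonneg (hc j) (sq_nonneg _)
  have := (Finset.sum_eq_zero_iff_of_nonneg h0).mp h i (Finset.mem_univ i)
  rcases mul_eq_zero.mp this with h' | h'
  · rw [h', zero_mul]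
  · rw [pow_eq_zero_iff (two_ne_zero)] at h'
    rw [h', mul_zero]

lemma quad_zero_mulVec (l : Fin n → Fin r → ℤ) (c : Fin n → ℝ) (u : Fin r → ℝ)
    (hc : ∀ i, 0 ≤ c i)
    (h : u ⬝ᵥ ((∑ i, c i • rankOne (l i)) *ᵥ u) = 0) :
    (∑ i, c i • rankOne (l i)) *ᵥ u = 0 := by
  rw [comb_mulVec]
  exact Finset.sum_eq_zero fun i _ => by rw [comb_terms_zero l c u hc h i, zero_smul]

/-- the linear functional `x ↦ u ⬝ᵥ x`. -/
def dotL (u : Fin r → ℝ) : (Fin r → ℝ) →ₗ[ℝ] ℝ where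
  toFun x := u ⬝ᵥ x
  map_add' x y := dotProduct_add u x y
  map_smul' a x := by simp [dotProduct_smul]

@[simp] lemma dotL_apply (u x : Fin r → ℝ) : dotL u x = u ⬝ᵥ x := rfl

lemma mem_hyperplane_iff (H : Submodule ℝ (Fin r → ℝ)) (hH : Module.finrank ℝ H = r - 1)
    (hr1 : 1 ≤ r) (u : Fin r → ℝ) (hu : u ≠ 0) (huH : ∀ x ∈ H, u ⬝ᵥ x = 0) :
    ∀ x, x ∈ H ↔ u ⬝ᵥ x = 0 := by
  have hker : H ≤ LinearMap.ker (dotL u) := fun x hx => by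
    simpa using huH x hx
  have hfu : dotL u u ≠ 0 := by
    simpa [dotProduct_self_eq_zero] using hu
  have hrange : LinearMap.range (dotL u) = ⊤ := by
    rw [Submodule.eq_top_iff']
    intro x
    have huu : u ⬝ᵥ u ≠ 0 := by simpa [dotProduct_self_eq_zero] using hu
    have h1 : (1:ℝ) ∈ LinearMap.range (dotL u) :=
      ⟨(u ⬝ᵥ u)⁻¹ • u, by
        show u ⬝ᵥ ((u ⬝ᵥ u)⁻¹ • u) = 1
        rw [dotProduct_smul, smul_eq_mul, inv_mul_cancel₀ huu]⟩
    simpa using Submodule.smul_mem _ x h1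
  have hkrank : Module.finrank ℝ (LinearMap.ker (dotL u)) = r - 1 := by
    have hs := LinearMap.finrank_range_add_finrank_ker (dotL u)
    rw [hrange] at hs
    have h1 : Module.finrank ℝ (⊤ : Submodule ℝ ℝ) = 1 := by simp
    have h2 : Module.finrank ℝ (Fin r → ℝ) = r := Module.finrank_fin_fun ℝ
    omega
  have hHk : H = LinearMap.ker (dotL u) :=
    Submodule.eq_of_le_of_finrank_eq hker (by rw [hH, hkrank])
  intro x
  rw [hHk, LinearMap.mem_ker, dotL_apply]

lemma exists_orthogonal (H : Submodule ℝ (Fin r → ℝ)) (hH : H ≠ ⊤) :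
    ∃ u : Fin r → ℝ, u ≠ 0 ∧ ∀ x ∈ H, u ⬝ᵥ x = 0 := by
  let e : EuclideanSpace ℝ (Fin r) ≃ₗ[ℝ] (Fin r → ℝ) := WithLp.linearEquiv 2 ℝ (Fin r → ℝ)
  let H' : Submodule ℝ (EuclideanSpace ℝ (Fin r)) := H.comap e.toLinearMap
  have hH' : H' ≠ ⊤ := by
    intro h
    apply hH
    rw [Submodule.eq_top_iff']
    intro x
    have hx : e.symm x ∈ H' := h ▸ Submodule.mem_top
    simpa [H'] using hx
  have hbot : H'ᗮ ≠ ⊥ := fun h => hH' (Submodule.orthogonal_eq_bot_iff.mp h)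
  obtain ⟨w, hw, hw0⟩ := Submodule.exists_mem_ne_zero_of_ne_bot hbot
  refine ⟨e w, ?_, ?_⟩
  · simpa using hw0
  · intro x hx
    have hx' : e.symm x ∈ H' := by simpa [H'] using hx
    have hinner : (inner ℝ (e.symm x) w : ℝ) = 0 := (Submodule.mem_orthogonal _ w).mp hw _ hx'
    have : ∑ i, x i * w i = 0 := by
      simpa [PiLp.inner_apply, e, mul_comm] using hinner
    have hew : ∀ i, e w i = w i := fun i => rfl
    simpa [dotProduct, hew, mul_comm] using this

end FaceAux

theorem face_of_rankOne_cone (r n : ℕ) (l : Fin n → (Fin r → ℤ))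
    (hprim : ∀ i, IsPrimitiveVec (l i))
    (hspan : Submodule.span ℝ (Set.range fun i => castVec (l i)) = ⊤)
    (τ : Set (Matrix (Fin r) (Fin r) ℝ))
    (hτ : τ = {B | ∃ c : Fin n → ℝ, (∀ i, 0 ≤ c i) ∧ B = ∑ i, c i • rankOne (l i)}) :
    (∃ S : Finset (Fin n),
      Module.finrank ℝ (Submodule.span ℝ ((fun i => castVec (l i)) '' ↑S)) = r - 1) ∧
    (∀ H : Submodule ℝ (Fin r → ℝ),
      (∃ S : Finset (Fin n), Submodule.span ℝ ((fun i => castVec (l i)) '' ↑S) = H) →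
      Module.finrank ℝ H = r - 1 →
      ∀ τH : Set (Matrix (Fin r) (Fin r) ℝ),
        τH = {B | ∃ c : Fin n → ℝ, (∀ i, 0 ≤ c i) ∧
                (∀ i, castVec (l i) ∉ H → c i = 0) ∧ B = ∑ i, c i • rankOne (l i)} →
        IsExtreme ℝ τ τH ∧
        (∀ u : Fin r → ℝ, u ≠ 0 → (∀ x ∈ H, u ⬝ᵥ x = 0) →
          τH = {B | B ∈ τ ∧ B *ᵥ u = 0}) ∧
        (∀ B ∈ τH, B.rank ≤ r - 1) ∧
        (∃ B ∈ τH, B.rank = r - 1)) := by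
  classical
  have hdim : Module.finrank ℝ (Fin r → ℝ) = r := Module.finrank_fin_fun ℝ
  constructor
  · -- part (a)
    by_cases hr0 : r = 0
    · exact ⟨∅, by simp [hr0]⟩
    · have hr1 : 1 ≤ r := Nat.one_le_iff_ne_zero.mpr hr0
      obtain ⟨t, hts, htsp, hli⟩ :=
        exists_linearIndependent ℝ (Set.range fun i => castVec (l i))
      rw [hspan] at htsp
      have hfin : t.Finite := hli.setFinite
      lift t to Finset (Fin r → ℝ) using hfin with T hT
      subst hT
      have hcard : T.card = r := by
        have h1 := finrank_span_set_eq_card hli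
        rw [htsp] at h1
        rw [finrank_top, hdim] at h1
        rw [Finset.toFinset_coe] at h1
        omega
      have hne : T.Nonempty := by
        rw [← Finset.card_pos, hcard]; omega
      obtain ⟨x, hx⟩ := hne
      set T' : Finset (Fin r → ℝ) := T.erase x with hT'
      have hsub : (↑T' : Set (Fin r → ℝ)) ⊆ ↑T :=
        Finset.coe_subset.mpr (Finset.erase_subset x T)
      have hli' := LinearIndepOn.mono (show LinearIndepOn ℝ id (↑T : Set (Fin r → ℝ)) from hli) hsub
      have hcard' : T'.card = r - 1 := by
        rw [hT', Finset.card_erase_of_mem hx, hcard]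
      have hrank' :
          Module.finrank ℝ (Submodule.span ℝ (↑T' : Set (Fin r → ℝ))) = r - 1 := by
        rw [finrank_span_set_eq_card hli', Finset.toFinset_coe, hcard']
      have hch : ∀ y ∈ T', ∃ i, castVec (l i) = y := by
        intro y hy
        have : y ∈ Set.range (fun i => castVec (l i)) :=
          hts (hsub (Finset.mem_coe.mpr hy))
        exact this
      choose g hg using hch
      refine ⟨T'.attach.image (fun y => g y.1 y.2), ?_⟩
      have himg : ((fun i => castVec (l i)) '' ↑(T'.attach.image fun y => g y.1 y.2))
          = (↑T' : Set (Fin r → ℝ)) := by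
        ext y
        constructor
        · rintro ⟨i, hi, rfl⟩
          simp only [Finset.coe_image, Set.mem_image, Finset.mem_coe,
            Finset.mem_image, Finset.mem_attach] at hi
          obtain ⟨z, -, rfl⟩ := hi
          show castVec (l (g z.1 z.2)) ∈ (↑T' : Set (Fin r → ℝ))
          rw [hg z.1 z.2]
          exact z.2
        · intro hy
          refine ⟨g y hy, ?_, hg y hy⟩
          simp only [Finset.coe_image, Set.mem_image, Finset.mem_coe, Finset.mem_attach]
          exact ⟨⟨y, hy⟩, by simp, rfl⟩
      rw [himg]
      exact hrank'
  · -- part (b)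
    rintro H ⟨S, hS⟩ hHrank τH hτH
    by_cases hr0 : r = 0
    · subst hr0
      have hmat : ∀ A B : Matrix (Fin 0) (Fin 0) ℝ, A = B := fun A B => by
        ext i j; exact i.elim0
      have hsub : τH ⊆ τ := by
        rw [hτ, hτH]
        rintro B ⟨c, hc, -, rfl⟩
        exact ⟨c, hc, rfl⟩
      have hrank0 : ∀ B : Matrix (Fin 0) (Fin 0) ℝ, B.rank = 0 := fun B => by
        have h := Matrix.rank_le_card_width B
        simp only [Fintype.card_fin] at h
        omega
      refine ⟨⟨hsub, ?_⟩, ?_, ?_, ?_⟩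
      · intro x hx y hy z hz hseg
        rw [hmat x z]
        exact hz
      · intro u hu
        exact absurd (funext fun i => i.elim0) hu
      · intro B hB
        simp [hrank0 B]
      · refine ⟨∑ i, (0:ℝ) • rankOne (l i), ?_, by simp [hrank0]⟩
        rw [hτH]
        exact ⟨fun _ => 0, fun i => le_refl 0, fun i _ => rfl, rfl⟩
    have hr1 : 1 ≤ r := Nat.one_le_iff_ne_zero.mpr hr0
    have hHtop : H ≠ ⊤ := by
      intro h
      rw [h, finrank_top, hdim] at hHrank
      omega
    obtain ⟨u₀, hu₀, hu₀H⟩ := FaceAux.exists_orthogonal H hHtop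
    have key : ∀ u : Fin r → ℝ, u ≠ 0 → (∀ x ∈ H, u ⬝ᵥ x = 0) →
        ∀ B : Matrix (Fin r) (Fin r) ℝ, B ∈ τH ↔ B ∈ τ ∧ B *ᵥ u = 0 := by
      intro u hu huH B
      have hmem : ∀ x, x ∈ H ↔ u ⬝ᵥ x = 0 :=
        FaceAux.mem_hyperplane_iff H hHrank hr1 u hu huH
      rw [hτ, hτH]
      simp only [Set.mem_setOf_eq]
      constructor
      · rintro ⟨c, hc, hcH, rfl⟩
        refine ⟨⟨c, hc, rfl⟩, ?_⟩
        rw [FaceAux.comb_mulVec]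
        refine Finset.sum_eq_zero fun i _ => ?_
        by_cases hi : castVec (l i) ∈ H
        · have h0 : u ⬝ᵥ castVec (l i) = 0 := huH _ hi
          rw [dotProduct_comm] at h0
          rw [h0, mul_zero, zero_smul]
        · rw [hcH i hi, zero_mul, zero_smul]
      · rintro ⟨⟨c, hc, rfl⟩, hBu⟩
        refine ⟨c, hc, fun i hi => ?_, rfl⟩
        have hq : u ⬝ᵥ ((∑ j, c j • rankOne (l j)) *ᵥ u) = 0 := by
          rw [hBu, dotProduct_zero]
        have hterm := FaceAux.comb_terms_zero l c u hc hq i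
        have hne : castVec (l i) ⬝ᵥ u ≠ 0 := fun h =>
          hi ((hmem _).mpr (by rwa [dotProduct_comm] at h))
        rcases mul_eq_zero.mp hterm with h | h
        · exact h
        · exact absurd h hne
    have hτHτ : τH ⊆ τ := fun B hB => ((key u₀ hu₀ hu₀H B).mp hB).1
    -- claim 3
    have hrank_le : ∀ B ∈ τH, B.rank ≤ r - 1 := by
      intro B hB
      have hBu : B *ᵥ u₀ = 0 := ((key u₀ hu₀ hu₀H B).mp hB).2
      have hker : u₀ ∈ LinearMap.ker B.mulVecLin := by
        rw [LinearMap.mem_ker, Matrix.mulVecLin_apply]; exact hBu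
      have hknz : LinearMap.ker B.mulVecLin ≠ ⊥ := fun h => hu₀ (by simpa [h] using hker)
      have hkpos : Module.finrank ℝ (LinearMap.ker B.mulVecLin) ≠ 0 := fun h =>
        hknz (Submodule.finrank_eq_zero.mp h)
      have hs := LinearMap.finrank_range_add_finrank_ker B.mulVecLin
      rw [hdim] at hs
      have hrk : B.rank = Module.finrank ℝ (LinearMap.range B.mulVecLin) := rfl
      omega
    -- claim 4
    set cB : Fin n → ℝ := fun i => if castVec (l i) ∈ H then 1 else 0 with hcBdef
    have hcB : ∀ i, 0 ≤ cB i := fun i => by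
      rw [hcBdef]; dsimp only; split <;> norm_num
    set B₀ : Matrix (Fin r) (Fin r) ℝ := ∑ i, cB i • rankOne (l i) with hB₀
    have hB₀mem : B₀ ∈ τH := by
      rw [hτH]
      exact ⟨cB, hcB, fun i hi => by simp [hcBdef, hi], rfl⟩
    have hB₀rank : B₀.rank = r - 1 := by
      have hle := hrank_le B₀ hB₀mem
      -- lower bound via kernel
      have hinf : H ⊓ LinearMap.ker B₀.mulVecLin = ⊥ := by
        rw [Submodule.eq_bot_iff]
        intro x hx
        rw [Submodule.mem_inf] at hx
        obtain ⟨hxH, hxk⟩ := hx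
        have hBx : B₀ *ᵥ x = 0 := by
          rwa [LinearMap.mem_ker, Matrix.mulVecLin_apply] at hxk
        have hq : x ⬝ᵥ ((∑ i, cB i • rankOne (l i)) *ᵥ x) = 0 := by
          rw [← hB₀, hBx, dotProduct_zero]
        have hterm := FaceAux.comb_terms_zero l cB x hcB hq
        have hxv : ∀ yv ∈ (fun i => castVec (l i)) '' (↑S : Set (Fin n)),
            FaceAux.dotL x yv = 0 := by
          rintro yv ⟨i, hiS, rfl⟩
          have hiH : castVec (l i) ∈ H := by
            rw [← hS]
            exact Submodule.subset_span ⟨i, hiS, rfl⟩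
          have h1 := hterm i
          rw [hcBdef] at h1
          simp only [if_pos hiH, one_mul] at h1
          simpa [FaceAux.dotL_apply, dotProduct_comm] using h1
        have hHle : H ≤ LinearMap.ker (FaceAux.dotL x) := by
          rw [← hS, Submodule.span_le]
          intro yv hyv
          exact LinearMap.mem_ker.mpr (hxv yv hyv)
        have hxx : x ⬝ᵥ x = 0 := hHle hxH
        exact dotProduct_self_eq_zero.mp hxx
      have heq := Submodule.finrank_sup_add_finrank_inf_eq H (LinearMap.ker B₀.mulVecLin)
      rw [hinf, finrank_bot] at heq
      have hle2 := Submodule.finrank_le (H ⊔ LinearMap.ker B₀.mulVecLin)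
      rw [hdim] at hle2
      have hs := LinearMap.finrank_range_add_finrank_ker B₀.mulVecLin
      rw [hdim] at hs
      have hrk : B₀.rank = Module.finrank ℝ (LinearMap.range B₀.mulVecLin) := rfl
      omega
    refine ⟨⟨hτHτ, ?_⟩, ?_, hrank_le, ⟨B₀, hB₀mem, hB₀rank⟩⟩
    · -- extremality
      intro x hx y hy z hz hseg
      obtain ⟨a, b, ha, hb, hab, hz'⟩ := hseg
      have hzu : z *ᵥ u₀ = 0 := ((key u₀ hu₀ hu₀H z).mp hz).2
      have hx' : ∃ c : Fin n → ℝ, (∀ i, 0 ≤ c i) ∧ x = ∑ i, c i • rankOne (l i) := by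
        rw [hτ] at hx; exact hx
      have hy' : ∃ c : Fin n → ℝ, (∀ i, 0 ≤ c i) ∧ y = ∑ i, c i • rankOne (l i) := by
        rw [hτ] at hy; exact hy
      obtain ⟨cx, hcx, hxeq⟩ := hx'
      obtain ⟨cy, hcy, hyeq⟩ := hy'
      have hqx0 : 0 ≤ u₀ ⬝ᵥ (x *ᵥ u₀) := by
        rw [hxeq]; exact FaceAux.comb_quad_nonneg l cx u₀ hcx
      have hqy0 : 0 ≤ u₀ ⬝ᵥ (y *ᵥ u₀) := by
        rw [hyeq]; exact FaceAux.comb_quad_nonneg l cy u₀ hcy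
      have hsum : a * (u₀ ⬝ᵥ (x *ᵥ u₀)) + b * (u₀ ⬝ᵥ (y *ᵥ u₀)) = 0 := by
        have h1 : (a • x + b • y) *ᵥ u₀ = 0 := by rw [hz']; exact hzu
        calc a * (u₀ ⬝ᵥ (x *ᵥ u₀)) + b * (u₀ ⬝ᵥ (y *ᵥ u₀))
            = u₀ ⬝ᵥ ((a • x + b • y) *ᵥ u₀) := by
              rw [Matrix.add_mulVec, Matrix.smul_mulVec, Matrix.smul_mulVec,
                dotProduct_add, dotProduct_smul, dotProduct_smul, smul_eq_mul, smul_eq_mul]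
          _ = 0 := by rw [h1, dotProduct_zero]
      have hqx : u₀ ⬝ᵥ (x *ᵥ u₀) = 0 := by nlinarith
      have hqy : u₀ ⬝ᵥ (y *ᵥ u₀) = 0 := by nlinarith
      · refine (key u₀ hu₀ hu₀H x).mpr ⟨hx, ?_⟩
        rw [hxeq] at hqx ⊢
        exact FaceAux.quad_zero_mulVec l cx u₀ hcx hqx
    · -- characterization
      intro u hu huH
      ext B
      simp only [Set.mem_setOf_eq]
      exact key u hu huH B
end
end

section
/- The Segre cubic threefold Σ ⊂ ℙ⁵(ℂ) defined by e_1 = e_3 = 0 has exactly 10 singular points: a point x ∈ ℂ⁶ \ {0} with e_1(x) = e_3(x) = 0 is a singular point of Σ (i.e., the 2×6 Jacobian matrix of (e_1, e_3) at x has rank at most 1) if and only if x is a nonzero scalar multiple of a coordinate permutation of (1,1,1,−1,−1,−1); up to scalar these form exactly 10 points of ℙ⁵(ℂ). -/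
/-!
The Segre cubic threefold `Σ ⊂ ℙ⁵(ℂ)` defined by `e₁ = e₃ = 0` has exactly 10 singular
points: a nonzero `x ∈ ℂ⁶` with `e₁(x) = e₃(x) = 0` is a singular point (the `2 × 6`
Jacobian of `(e₁, e₃)` at `x` has rank at most `1`) iff `x` is a nonzero scalar multiple
of a coordinate permutation of `(1,1,1,−1,−1,−1)`; up to scalar these are exactly 10
points of `ℙ⁵(ℂ)`.
-/

open MvPolynomial
open Finset Matrix

noncomputable section

/-- The `k`-th elementary symmetric polynomial in six complex variables. -/
def e (k : ℕ) : MvPolynomial (Fin 6) ℂ := esymm (Fin 6) ℂ k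

/-- The sign vector `(1,1,1,−1,−1,−1)`. -/
def sgn : Fin 6 → ℂ := ![1, 1, 1, -1, -1, -1]

/-- The `2 × 6` Jacobian matrix of `(e₁, e₃)` at `x`. -/
def jac (x : Fin 6 → ℂ) : Matrix (Fin 2) (Fin 6) ℂ :=
  Matrix.of fun a i => eval x (pderiv i (e (if a = 0 then 1 else 3)))

lemma eval_e (x : Fin 6 → ℂ) (k : ℕ) :
    eval x (e k) = ∑ t ∈ powersetCard k (univ : Finset (Fin 6)), ∏ i ∈ t, x i := by
  simp [e, esymm, eval_sum, eval_prod]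

lemma sum_sgn3 : ∑ t ∈ powersetCard 3 (univ : Finset (Fin 6)), ∏ i ∈ t, sgn i = 0 := by
  have hw : ∀ i, sgn i = ((![1,1,1,-1,-1,-1] : Fin 6 → ℤ) i : ℂ) := by
    intro i; fin_cases i <;> simp [sgn, Matrix.cons_val_succ, show (5:Fin 6) = Fin.succ 4 from rfl]
  have h0 : (∑ t ∈ powersetCard 3 (univ : Finset (Fin 6)), ∏ i ∈ t, (![1,1,1,-1,-1,-1] : Fin 6 → ℤ) i) = 0 := by
    decide
  calc ∑ t ∈ powersetCard 3 (univ : Finset (Fin 6)), ∏ i ∈ t, sgn i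
      = ((∑ t ∈ powersetCard 3 (univ : Finset (Fin 6)), ∏ i ∈ t, (![1,1,1,-1,-1,-1] : Fin 6 → ℤ) i : ℤ) : ℂ) := by
        push_cast; exact Finset.sum_congr rfl fun t _ => Finset.prod_congr rfl fun i _ => hw i
    _ = 0 := by rw [h0]; simp

lemma eval_sgn1 : eval sgn (e 1) = 0 := by
  rw [e, esymm_one]
  simp [eval_sum, Fin.sum_univ_six, sgn, Matrix.cons_val_succ, show (5:Fin 6) = Fin.succ 4 from rfl]

lemma eval_sgn3 : eval sgn (e 3) = 0 := by rw [eval_e]; exact sum_sgn3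

lemma pderiv_prod_X (i : Fin 6) (t : Finset (Fin 6)) :
    pderiv i (∏ j ∈ t, (X j : MvPolynomial (Fin 6) ℂ)) =
      if i ∈ t then ∏ j ∈ t.erase i, X j else 0 := by
  induction t using Finset.induction_on with
  | empty => simp
  | @insert a s ha ih =>
    rw [Finset.prod_insert ha, pderiv_mul, ih]
    by_cases hia : i = a
    · subst hia
      simp [ha, Finset.erase_insert ha]
    · by_cases his : i ∈ s
      · rw [if_pos his, if_pos (Finset.mem_insert_of_mem his),
          Finset.erase_insert_of_ne (Ne.symm hia), Finset.prod_insert]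
        · simp [pderiv_X_of_ne (Ne.symm hia)]
        · exact fun h => ha (Finset.mem_of_mem_erase h)
      · have : i ∉ insert a s := by simp [hia, his]
        simp [pderiv_X_of_ne (Ne.symm hia), his, this]

lemma sum_split (k : ℕ) (F : Finset (Fin 6) → ℂ) {i : Fin 6} {A : Finset (Fin 6)} (hiA : i ∉ A) :
    ∑ t ∈ powersetCard (k+1) (insert i A), F t
      = (∑ t ∈ powersetCard (k+1) A, F t) + ∑ s ∈ powersetCard k A, F (insert i s) := by
  rw [Finset.powersetCard_succ_insert hiA, Finset.sum_union, Finset.sum_image]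
  · intro s hs t ht hst
    have hs' : i ∉ s := fun h => hiA ((Finset.mem_powersetCard.1 hs).1 h)
    have ht' : i ∉ t := fun h => hiA ((Finset.mem_powersetCard.1 ht).1 h)
    rw [← Finset.erase_insert hs', ← Finset.erase_insert ht', hst]
  · rw [Finset.disjoint_left]
    intro t ht htim
    have ht' : i ∉ t := fun h => hiA ((Finset.mem_powersetCard.1 ht).1 h)
    rcases Finset.mem_image.1 htim with ⟨s, hs, rfl⟩
    exact ht' (Finset.mem_insert_self i s)

lemma eval_pderiv_e1 (x : Fin 6 → ℂ) (i : Fin 6) : eval x (pderiv i (e 1)) = 1 := by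
  rw [e, esymm_one, map_sum]
  rw [eval_sum]
  simp [pderiv_X, Pi.single_apply]

lemma eval_pderiv_e3 (x : Fin 6 → ℂ) (i : Fin 6) :
    eval x (pderiv i (e 3)) = eval x (e 2) - x i * eval x (e 1) + x i ^ 2 := by
  classical
  set A := (univ : Finset (Fin 6)).erase i with hA
  have hiA : i ∉ A := Finset.notMem_erase i univ
  have hins : insert i A = univ := Finset.insert_erase (Finset.mem_univ i)
  have hprod : ∀ (k : ℕ), ∀ s ∈ powersetCard k A, ∏ j ∈ (insert i s), x j = x i * ∏ j ∈ s, x j := by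
    intro k s hs
    exact Finset.prod_insert (fun h => hiA ((Finset.mem_powersetCard.1 hs).1 h))
  have hD : eval x (pderiv i (e 3)) = ∑ s ∈ powersetCard 2 A, ∏ j ∈ s, x j := by
    rw [e, esymm, map_sum, eval_sum]
    simp_rw [pderiv_prod_X, apply_ite (eval x), eval_prod, eval_X, map_zero]
    rw [← hins, sum_split 2 (fun t => if i ∈ t then ∏ j ∈ t.erase i, x j else 0) hiA]
    have h1 : ∑ t ∈ powersetCard 3 A, (if i ∈ t then ∏ j ∈ t.erase i, x j else 0) = 0 := by
      refine Finset.sum_eq_zero fun t ht => ?_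
      rw [if_neg fun h => hiA ((Finset.mem_powersetCard.1 ht).1 h)]
    rw [h1, zero_add]
    refine Finset.sum_congr rfl fun s hs => ?_
    have his : i ∉ s := fun h => hiA ((Finset.mem_powersetCard.1 hs).1 h)
    rw [if_pos (Finset.mem_insert_self i s), Finset.erase_insert his]
  have hE2 : eval x (e 2) = (∑ t ∈ powersetCard 2 A, ∏ j ∈ t, x j)
      + x i * ∑ s ∈ powersetCard 1 A, ∏ j ∈ s, x j := by
    rw [eval_e, ← hins, sum_split 1 (fun t => ∏ j ∈ t, x j) hiA, Finset.mul_sum]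
    congr 1
    exact Finset.sum_congr rfl (hprod 1)
  have hE1 : eval x (e 1) = (∑ t ∈ powersetCard 1 A, ∏ j ∈ t, x j) + x i := by
    rw [eval_e, ← hins, sum_split 0 (fun t => ∏ j ∈ t, x j) hiA]
    congr 1
    rw [Finset.powersetCard_zero, Finset.sum_singleton, Finset.prod_insert (Finset.notMem_empty i),
      Finset.prod_empty, mul_one]
  rw [hD, hE2, hE1]
  ring

lemma rank_le_one_of_rows {M : Matrix (Fin 2) (Fin 6) ℂ} (K : ℂ)
    (h0 : ∀ i, M 0 i = 1) (h1 : ∀ i, M 1 i = K) : M.rank ≤ 1 := by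
  rw [Matrix.rank_eq_finrank_span_row]
  have hone : (fun _ => (1:ℂ) : Fin 6 → ℂ) ≠ 0 := by
    intro h; exact one_ne_zero (congrFun h 0)
  have hle : Submodule.span ℂ (Set.range M) ≤ Submodule.span ℂ {(fun _ => 1 : Fin 6 → ℂ)} := by
    rw [Submodule.span_le]
    rintro v ⟨a, rfl⟩
    fin_cases a
    · show M 0 ∈ ↑(Submodule.span ℂ {(fun _ => 1 : Fin 6 → ℂ)})
      have : M 0 = (fun _ => 1 : Fin 6 → ℂ) := funext h0
      rw [this]; exact Submodule.subset_span rfl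
    · show M 1 ∈ ↑(Submodule.span ℂ {(fun _ => 1 : Fin 6 → ℂ)})
      have : M 1 = K • (fun _ => 1 : Fin 6 → ℂ) := by funext i; simp [h1 i]
      rw [this]
      exact Submodule.smul_mem _ _ (Submodule.subset_span rfl)
  calc Module.finrank ℂ ↥(Submodule.span ℂ (Set.range M))
      ≤ Module.finrank ℂ ↥(Submodule.span ℂ {(fun _ => 1 : Fin 6 → ℂ)}) :=
        Submodule.finrank_mono hle
    _ = 1 := finrank_span_singleton hone

lemma rows_eq_of_rank_le_one {M : Matrix (Fin 2) (Fin 6) ℂ} (h : M.rank ≤ 1)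
    (h0 : ∀ i, M 0 i = 1) (i j : Fin 6) : M 1 i = M 1 j := by
  by_contra hne
  have hli : LinearIndependent ℂ ![Mᵀ i, Mᵀ j] := by
    rw [linearIndependent_fin2]
    constructor
    · intro hz
      have := congrFun hz 0
      simp only [Matrix.cons_val_one, Matrix.cons_val_zero, Matrix.head_cons, Matrix.transpose_apply, Pi.zero_apply] at this
      rw [h0 j] at this
      exact one_ne_zero this
    · intro a ha
      have h00 := congrFun ha 0
      have h11 := congrFun ha 1
      simp only [Matrix.cons_val_zero, Matrix.cons_val_one, Matrix.head_cons, Matrix.transpose_apply, Pi.smul_apply, smul_eq_mul] at h00 h11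
      rw [h0 i, h0 j, mul_one] at h00
      rw [h00, one_mul] at h11
      exact hne h11.symm
  have hsub : Set.range ![Mᵀ i, Mᵀ j] ⊆ Set.range Mᵀ := by
    rintro v ⟨k, rfl⟩
    fin_cases k
    · exact ⟨i, rfl⟩
    · exact ⟨j, rfl⟩
  have hcard := linearIndependent_iff_card_eq_finrank_span.mp hli
  have h2 : (2 : ℕ) ≤ M.rank := by
    rw [Matrix.rank_eq_finrank_span_cols]
    change 2 ≤ Module.finrank ℂ ↥(Submodule.span ℂ (Set.range Mᵀ))
    have hmono := Submodule.finrank_mono (Submodule.span_mono hsub)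
      (R := ℂ) (M := Fin 2 → ℂ)
    rw [Fintype.card_fin] at hcard
    rw [Set.finrank] at hcard
    omega
  omega

lemma vec_five : (![1, 1, 1, -1, -1, -1] : Fin 6 → ℂ) 5 = -1 := by
  simp [Matrix.cons_val_succ, show (5:Fin 6) = Fin.succ 4 from rfl]

lemma sgn_eq_one_iff (j : Fin 6) : sgn j = 1 ↔ j ∈ ({0,1,2} : Finset (Fin 6)) := by
  fin_cases j <;> simp [sgn, vec_five] <;> norm_num

lemma sgn_cases (j : Fin 6) : sgn j = 1 ∨ sgn j = -1 := by
  fin_cases j <;>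
    simp [sgn, Matrix.cons_val_succ, show (5:Fin 6) = Fin.succ 4 from rfl]

lemma sgn_sq (j : Fin 6) : sgn j ^ 2 = 1 := by
  rcases sgn_cases j with h | h <;> rw [h] <;> ring

lemma sgn_ne_zero (j : Fin 6) : sgn j ≠ 0 := by
  rcases sgn_cases j with h | h <;> rw [h] <;> norm_num

lemma exists_perm (S : Finset (Fin 6)) (hS : S.card = 3) :
    ∃ π : Equiv.Perm (Fin 6), ∀ i, sgn (π i) = if i ∈ S then 1 else -1 := by
  classical
  set B : Finset (Fin 6) := {0,1,2} with hBdef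
  have hB : B.card = 3 := by decide
  have h1 : Fintype.card {x // x ∈ S} = Fintype.card {x // x ∈ B} := by
    rw [Fintype.card_coe, Fintype.card_coe, hS, hB]
  have h2 : Fintype.card {x // ¬ x ∈ S} = Fintype.card {x // ¬ x ∈ B} := by
    rw [Fintype.card_subtype_compl, Fintype.card_subtype_compl, h1]
  let eP : {x // x ∈ S} ≃ {x // x ∈ B} := Fintype.equivOfCardEq h1
  let eN : {x // ¬ x ∈ S} ≃ {x // ¬ x ∈ B} := Fintype.equivOfCardEq h2
  refine ⟨Equiv.subtypeCongr eP eN, fun i => ?_⟩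
  by_cases hi : i ∈ S
  · have happ : Equiv.subtypeCongr eP eN i = (eP ⟨i, hi⟩ : Fin 6) := by
      simp [Equiv.subtypeCongr, hi]
    rw [happ, if_pos hi, sgn_eq_one_iff]
    exact (eP ⟨i, hi⟩).2
  · have happ : Equiv.subtypeCongr eP eN i = (eN ⟨i, hi⟩ : Fin 6) := by
      simp [Equiv.subtypeCongr, hi]
    rw [happ, if_neg hi]
    rcases sgn_cases (eN ⟨i, hi⟩) with h | h
    · exact absurd ((sgn_eq_one_iff _).1 h) (eN ⟨i, hi⟩).2
    · exact h

lemma eval_perm_smul (c : ℂ) (π : Equiv.Perm (Fin 6)) (k : ℕ) :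
    eval (fun i => c * sgn (π i)) (e k) = c ^ k * eval sgn (e k) := by
  have h1 : eval (fun i => c * sgn (π i)) (e k)
      = ∑ t ∈ powersetCard k (univ : Finset (Fin 6)), c ^ k * ∏ i ∈ t, sgn (π i) := by
    rw [eval_e]
    refine Finset.sum_congr rfl fun t ht => ?_
    rw [Finset.prod_mul_distrib, Finset.prod_const, (Finset.mem_powersetCard.mp ht).2]
  rw [h1, ← Finset.mul_sum]
  congr 1
  have h2 : ∑ t ∈ powersetCard k (univ : Finset (Fin 6)), ∏ i ∈ t, sgn (π i)
      = eval (sgn ∘ π) (e k) := (eval_e (sgn ∘ π) k).symm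
  rw [h2]
  calc eval (sgn ∘ π) (e k) = eval sgn (rename π (e k)) := by rw [eval_rename]
    _ = eval sgn (e k) := by rw [e, rename_esymm]

lemma jac_row0 (x : Fin 6 → ℂ) (i : Fin 6) : jac x 0 i = 1 := by
  have : jac x 0 i = eval x (pderiv i (e 1)) := by simp [jac]
  rw [this, eval_pderiv_e1]

lemma jac_row1 (x : Fin 6 → ℂ) (i : Fin 6) :
    jac x 1 i = eval x (e 2) - x i * eval x (e 1) + x i ^ 2 := by
  have : jac x 1 i = eval x (pderiv i (e 3)) := by simp [jac]
  rw [this, eval_pderiv_e3]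

lemma eval_e1_sum (x : Fin 6 → ℂ) : eval x (e 1) = ∑ i, x i := by
  rw [e, esymm_one, eval_sum]; simp

def vset (S : Finset (Fin 6)) : Fin 6 → ℂ := fun i => if i ∈ S then 1 else -1

lemma vset_ne_zero (S : Finset (Fin 6)) : vset S ≠ 0 := by
  intro h
  have h0 := congrFun h 0
  unfold vset at h0
  split_ifs at h0
  · exact one_ne_zero h0
  · norm_num at h0

lemma part1 (x : Fin 6 → ℂ) (hx : x ≠ 0) :
    (eval x (e 1) = 0 ∧ eval x (e 3) = 0 ∧ (jac x).rank ≤ 1) ↔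
      ∃ (c : ℂ) (π : Equiv.Perm (Fin 6)), c ≠ 0 ∧ x = fun i => c * sgn (π i) := by
  classical
  constructor
  · rintro ⟨h1, _h3, hr⟩
    have hsq : ∀ i j, x i ^ 2 = x j ^ 2 := by
      intro i j
      have hth := rows_eq_of_rank_le_one hr (jac_row0 x) i j
      rw [jac_row1 x i, jac_row1 x j, h1] at hth
      linear_combination hth
    obtain ⟨i0, hi0⟩ : ∃ i, x i ≠ 0 := by
      by_contra h; push_neg at h; exact hx (funext h)
    set t := x i0 with ht
    set A := Finset.univ.filter (fun i => x i = t) with hAdef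
    have hmemA : ∀ i, i ∈ A → x i = t := fun i hi => (Finset.mem_filter.1 hi).2
    have hmem : ∀ i, i ∉ A → x i = -t := by
      intro i hiA
      have hxi : x i ≠ t := fun h => hiA (Finset.mem_filter.2 ⟨Finset.mem_univ i, h⟩)
      have hz : (x i - t) * (x i + t) = 0 := by linear_combination hsq i i0
      rcases mul_eq_zero.1 hz with h | h
      · exact absurd (sub_eq_zero.1 h) hxi
      · exact eq_neg_of_add_eq_zero_left h
    have hA3 : A.card = 3 := by
      set B := Finset.univ.filter (fun i => ¬ x i = t) with hBdef
      have hsum0 : ∑ i, x i = 0 := by rw [← eval_e1_sum, h1]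
      have hsplit : ∑ i ∈ A, x i + ∑ i ∈ B, x i = ∑ i, x i :=
        Finset.sum_filter_add_sum_filter_not Finset.univ _ x
      have hAsum : ∑ i ∈ A, x i = (A.card : ℂ) * t := by
        rw [Finset.sum_congr rfl hmemA, Finset.sum_const, nsmul_eq_mul]
      have hBsum : ∑ i ∈ B, x i = (B.card : ℂ) * (-t) := by
        have : ∀ i ∈ B, x i = -t := by
          intro i hi
          exact hmem i (fun hA => (Finset.mem_filter.1 hi).2 (hmemA i hA))
        rw [Finset.sum_congr rfl this, Finset.sum_const, nsmul_eq_mul]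
      have hcards : ((A.card : ℂ)) * t = ((B.card : ℂ)) * t := by
        rw [hAsum, hBsum, hsum0] at hsplit
        linear_combination hsplit
      have hAB : A.card = B.card := by
        have := mul_right_cancel₀ hi0 hcards
        exact_mod_cast this
      have hsum6 : A.card + B.card = 6 := by
        rw [hAdef, hBdef, Finset.card_filter_add_card_filter_not]
        simp
      omega
    obtain ⟨π, hπ⟩ := exists_perm A hA3
    refine ⟨t, π, hi0, funext fun i => ?_⟩
    rw [hπ i]
    by_cases hi : i ∈ A
    · rw [if_pos hi, mul_one]; exact hmemA i hi
    · rw [if_neg hi, mul_neg_one]; exact hmem i hi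
  · rintro ⟨c, π, hc, rfl⟩
    have h1 : eval (fun i => c * sgn (π i)) (e 1) = 0 := by
      rw [eval_perm_smul, eval_sgn1, mul_zero]
    have h3 : eval (fun i => c * sgn (π i)) (e 3) = 0 := by
      rw [eval_perm_smul, eval_sgn3, mul_zero]
    refine ⟨h1, h3, rank_le_one_of_rows (eval (fun i => c * sgn (π i)) (e 2) + c ^ 2)
      (jac_row0 _) (fun i => ?_)⟩
    rw [jac_row1, h1]
    have : (c * sgn (π i)) ^ 2 = c ^ 2 := by
      rw [mul_pow, sgn_sq, mul_one]
    rw [this]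
    ring

lemma part2 :
    Set.ncard {P : Projectivization ℂ (Fin 6 → ℂ) |
      ∃ (x : Fin 6 → ℂ) (hx : x ≠ 0), P = Projectivization.mk ℂ x hx ∧
        ∃ (c : ℂ) (π : Equiv.Perm (Fin 6)), c ≠ 0 ∧ x = fun i => c * sgn (π i)} = 10 := by
  classical
  have hTG : {P : Projectivization ℂ (Fin 6 → ℂ) |
      ∃ (x : Fin 6 → ℂ) (hx : x ≠ 0), P = Projectivization.mk ℂ x hx ∧
        ∃ (c : ℂ) (π : Equiv.Perm (Fin 6)), c ≠ 0 ∧ x = fun i => c * sgn (π i)}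
      = (fun S => Projectivization.mk ℂ (vset S) (vset_ne_zero S)) ''
          {S : Finset (Fin 6) | S.card = 3 ∧ (0 : Fin 6) ∈ S} := by
    ext P
    constructor
    · rintro ⟨x, hx, rfl, c, π, hc, hxeq⟩
      subst hxeq
      set A := Finset.univ.filter (fun i => π i ∈ ({0,1,2} : Finset (Fin 6))) with hAdef
      have hiff : ∀ i, i ∈ A ↔ π i ∈ ({0,1,2} : Finset (Fin 6)) := by
        intro i; rw [hAdef]; simp
      have hsgnA : ∀ i, sgn (π i) = if i ∈ A then 1 else -1 := by
        intro i
        by_cases hiA : i ∈ A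
        · rw [if_pos hiA]; exact (sgn_eq_one_iff (π i)).2 ((hiff i).1 hiA)
        · rw [if_neg hiA]
          rcases sgn_cases (π i) with hs | hs
          · exact absurd ((hiff i).2 ((sgn_eq_one_iff (π i)).1 hs)) hiA
          · exact hs
      have hA3 : A.card = 3 := by
        have him : A = ({0,1,2} : Finset (Fin 6)).image π.symm := by
          ext i
          simp only [hAdef, Finset.mem_filter, Finset.mem_univ, true_and, Finset.mem_image]
          constructor
          · intro h; exact ⟨π i, h, π.symm_apply_apply i⟩
          · rintro ⟨j, hj, rfl⟩; rwa [π.apply_symm_apply]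
        rw [him, Finset.card_image_of_injective _ π.symm.injective]
        decide
      by_cases h0 : (0 : Fin 6) ∈ A
      · refine ⟨A, ⟨hA3, h0⟩, ?_⟩
        refine (Projectivization.mk_eq_mk_iff' ℂ _ _ _ _).2 ⟨c⁻¹, ?_⟩
        funext i
        simp only [Pi.smul_apply, smul_eq_mul]
        rw [hsgnA i]
        by_cases hi : i ∈ A <;> simp [vset, hi] <;> field_simp
      · refine ⟨Aᶜ, ⟨?_, Finset.mem_compl.2 h0⟩, ?_⟩
        · rw [Finset.card_compl, hA3]; rfl
        · refine (Projectivization.mk_eq_mk_iff' ℂ _ _ _ _).2 ⟨-c⁻¹, ?_⟩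
          funext i
          simp only [Pi.smul_apply, smul_eq_mul]
          rw [hsgnA i]
          by_cases hi : i ∈ A <;> simp [vset, hi] <;> field_simp
    · rintro ⟨S, ⟨hS3, hS0⟩, rfl⟩
      obtain ⟨π, hπ⟩ := exists_perm S hS3
      refine ⟨vset S, vset_ne_zero S, rfl, 1, π, one_ne_zero, ?_⟩
      funext i
      rw [one_mul, hπ i]
      rfl
  rw [hTG]
  have hinj : Set.InjOn (fun S => Projectivization.mk ℂ (vset S) (vset_ne_zero S))
      {S : Finset (Fin 6) | S.card = 3 ∧ (0 : Fin 6) ∈ S} := by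
    rintro S ⟨_, hS0⟩ T ⟨_, hT0⟩ hST
    obtain ⟨a, ha⟩ := (Projectivization.mk_eq_mk_iff' ℂ _ _ _ _).1 hST
    have ha0 := congrFun ha 0
    simp only [Pi.smul_apply, smul_eq_mul, vset, if_pos hS0, if_pos hT0, mul_one] at ha0
    subst ha0
    ext i
    have hi := congrFun ha i
    simp only [Pi.smul_apply, smul_eq_mul, one_mul, vset] at hi
    constructor
    · intro hiS
      by_contra hiT
      rw [if_pos hiS, if_neg hiT] at hi
      norm_num at hi
    · intro hiT
      by_contra hiS
      rw [if_pos hiT, if_neg hiS] at hi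
      norm_num at hi
  rw [Set.ncard_image_of_injOn hinj]
  have hset : {S : Finset (Fin 6) | S.card = 3 ∧ (0 : Fin 6) ∈ S}
      = ↑(Finset.univ.filter (fun S : Finset (Fin 6) => S.card = 3 ∧ (0 : Fin 6) ∈ S)) := by
    ext S; simp
  rw [hset, Set.ncard_coe_finset]
  decide


theorem segre_cubic_ten_nodes :
    (∀ x : Fin 6 → ℂ, x ≠ 0 →
      ((eval x (e 1) = 0 ∧ eval x (e 3) = 0 ∧ (jac x).rank ≤ 1) ↔
        ∃ (c : ℂ) (π : Equiv.Perm (Fin 6)), c ≠ 0 ∧ x = fun i => c * sgn (π i))) ∧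
    Set.ncard {P : Projectivization ℂ (Fin 6 → ℂ) |
      ∃ (x : Fin 6 → ℂ) (hx : x ≠ 0), P = Projectivization.mk ℂ x hx ∧
        ∃ (c : ℂ) (π : Equiv.Perm (Fin 6)), c ≠ 0 ∧ x = fun i => c * sgn (π i)} = 10 := by
  exact ⟨fun x hx => part1 x hx, part2⟩
end
end

section
/- Let R = ℂ[x_0,…,x_5]/(e_1, e_3), with the symmetric group S_6 acting by permuting the variables. Then the invariant subalgebra R^{S_6} is a free polynomial algebra on the images of e_2, e_4, e_5, e_6: these four elements generate R^{S_6} as a ℂ-algebra and are algebraically independent over ℂ. (This is the algebraic form of the statement that the quotient Σ/𝔖_6 of the Segre cubic is the weighted projective space ℙ(2,4,5,6).) -/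
/-!
Let `R = ℂ[x₀,…,x₅]/(e₁, e₃)` with the symmetric group `S₆` permuting the variables.
Then the invariant subalgebra `R^{S₆}` is a free polynomial algebra on the images of
`e₂, e₄, e₅, e₆`: these four elements generate `R^{S₆}` as a `ℂ`-algebra and are
algebraically independent over `ℂ`. (Algebraic form of `Σ/𝔖₆ ≅ ℙ(2,4,5,6)`.)
-/

open MvPolynomial

noncomputable section

/-- The ideal `(e₁, e₃)` of `ℂ[x₀,…,x₅]`. -/
def segreIdeal : Ideal (MvPolynomial (Fin 6) ℂ) :=
  Ideal.span {esymm (Fin 6) ℂ 1, esymm (Fin 6) ℂ 3}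

/-- The coordinate ring `R = ℂ[x₀,…,x₅]/(e₁, e₃)` of the affine cone over the
Segre cubic. -/
abbrev SegreRing : Type := MvPolynomial (Fin 6) ℂ ⧸ segreIdeal

/-- An element `r` of `R` is `S₆`-invariant if, for the action of `S₆` on `R` descended
from permuting the variables, every permutation fixes `r`: for any permutation `π` and
any lift `p` of `r`, the class of `rename π p` is again `r`. -/
def IsS6Invariant (r : SegreRing) : Prop :=
  ∀ (π : Equiv.Perm (Fin 6)) (p : MvPolynomial (Fin 6) ℂ),
    Ideal.Quotient.mk segreIdeal p = r →
      Ideal.Quotient.mk segreIdeal (rename (⇑π) p) = r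

/-- The images in `R` of `e₂, e₄, e₅, e₆`. -/
def eBar : Fin 4 → SegreRing :=
  ![Ideal.Quotient.mk segreIdeal (esymm (Fin 6) ℂ 2),
    Ideal.Quotient.mk segreIdeal (esymm (Fin 6) ℂ 4),
    Ideal.Quotient.mk segreIdeal (esymm (Fin 6) ℂ 5),
    Ideal.Quotient.mk segreIdeal (esymm (Fin 6) ℂ 6)]

lemma rename_mem_segreIdeal (π : Equiv.Perm (Fin 6)) {a : MvPolynomial (Fin 6) ℂ}
    (ha : a ∈ segreIdeal) : rename (⇑π) a ∈ segreIdeal := by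
  rw [segreIdeal, Ideal.mem_span_pair] at ha ⊢
  obtain ⟨u, v, h⟩ := ha
  refine ⟨rename (⇑π) u, rename (⇑π) v, ?_⟩
  rw [← h, map_add, map_mul, map_mul, esymm_isSymmetric (Fin 6) ℂ 1 π,
    esymm_isSymmetric (Fin 6) ℂ 3 π]

/-- The descended action of a permutation on `SegreRing`. -/
def segrePerm (π : Equiv.Perm (Fin 6)) : SegreRing →ₐ[ℂ] SegreRing :=
  Ideal.Quotient.liftₐ segreIdeal
    ((Ideal.Quotient.mkₐ ℂ segreIdeal).comp (rename (⇑π)))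
    (fun a ha => by
      show Ideal.Quotient.mkₐ ℂ segreIdeal (rename (⇑π) a) = 0
      rw [Ideal.Quotient.mkₐ_eq_mk, Ideal.Quotient.eq_zero_iff_mem]
      exact rename_mem_segreIdeal π ha)

lemma segrePerm_mk (π : Equiv.Perm (Fin 6)) (p : MvPolynomial (Fin 6) ℂ) :
    segrePerm π (Ideal.Quotient.mk segreIdeal p)
      = Ideal.Quotient.mk segreIdeal (rename (⇑π) p) := rfl

lemma segrePerm_mk_esymm (π : Equiv.Perm (Fin 6)) (k : ℕ) :
    segrePerm π (Ideal.Quotient.mk segreIdeal (esymm (Fin 6) ℂ k))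
      = Ideal.Quotient.mk segreIdeal (esymm (Fin 6) ℂ k) := by
  rw [segrePerm_mk, esymm_isSymmetric (Fin 6) ℂ k π]

lemma segrePerm_eBar (π : Equiv.Perm (Fin 6)) (i : Fin 4) :
    segrePerm π (eBar i) = eBar i := by
  fin_cases i <;> exact segrePerm_mk_esymm π _

lemma segrePerm_fixed_of_mem_adjoin (π : Equiv.Perm (Fin 6)) {r : SegreRing}
    (hr : r ∈ Algebra.adjoin ℂ (Set.range eBar)) : segrePerm π r = r := by
  refine Algebra.adjoin_induction ?_ ?_ ?_ ?_ hr
  · rintro x ⟨i, rfl⟩; exact segrePerm_eBar π i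
  · intro c; exact (segrePerm π).commutes c
  · intro x y _ _ hx hy; rw [map_add, hx, hy]
  · intro x y _ _ hx hy; rw [map_mul, hx, hy]

lemma mem_adjoin_of_invariant {r : SegreRing} (hr : IsS6Invariant r) :
    r ∈ Algebra.adjoin ℂ (Set.range eBar) := by
  obtain ⟨p, hp⟩ := Ideal.Quotient.mk_surjective r
  -- the symmetrized lift
  set q : MvPolynomial (Fin 6) ℂ :=
    ((720 : ℂ))⁻¹ • ∑ π : Equiv.Perm (Fin 6), rename (⇑π) p with hq
  have hq_sym : q.IsSymmetric := by
    intro σ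
    rw [hq, map_smul, map_sum]
    refine congrArg _ ?_
    refine Fintype.sum_bijective (fun π => σ * π)
      (Group.mulLeft_bijective σ) _ _ (fun π => ?_)
    rw [rename_rename, ← Equiv.Perm.coe_mul]
  have hcard : (Fintype.card (Equiv.Perm (Fin 6)) : ℂ) = 720 := by
    simp [Fintype.card_perm]
    norm_num [Nat.factorial]
  have hq_mk : Ideal.Quotient.mkₐ ℂ segreIdeal q = r := by
    rw [hq, map_smul, map_sum]
    have : ∀ π : Equiv.Perm (Fin 6),
        Ideal.Quotient.mkₐ ℂ segreIdeal (rename (⇑π) p) = r := fun π => hr π p hp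
    rw [Finset.sum_congr rfl (fun π _ => this π), Finset.sum_const, Finset.card_univ,
      ← Nat.cast_smul_eq_nsmul ℂ, hcard, smul_smul]
    norm_num
  obtain ⟨F, hF⟩ := esymmAlgHom_fin_surjective (R := ℂ) (le_refl 6) ⟨q, hq_sym⟩
  have hFq : aeval (fun i : Fin 6 => esymm (Fin 6) ℂ (i + 1)) F = q := by
    have h2 := congrArg Subtype.val hF
    rwa [esymmAlgHom_apply] at h2
  have hr' : r = aeval (fun i : Fin 6 =>
      Ideal.Quotient.mkₐ ℂ segreIdeal (esymm (Fin 6) ℂ (i + 1))) F := by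
    rw [← hq_mk, ← hFq, comp_aeval_apply]
  have hg : ∀ i : Fin 6, Ideal.Quotient.mkₐ ℂ segreIdeal (esymm (Fin 6) ℂ (i + 1))
      ∈ Algebra.adjoin ℂ (Set.range eBar) := by
    intro i
    fin_cases i
    · have : Ideal.Quotient.mkₐ ℂ segreIdeal (esymm (Fin 6) ℂ 1) = 0 := by
        rw [Ideal.Quotient.mkₐ_eq_mk, Ideal.Quotient.eq_zero_iff_mem]
        exact Ideal.subset_span (by simp)
      show Ideal.Quotient.mkₐ ℂ segreIdeal (esymm (Fin 6) ℂ 1) ∈ _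
      rw [this]; exact Subalgebra.zero_mem _
    · exact Algebra.subset_adjoin ⟨0, by simp [eBar, Ideal.Quotient.mkₐ_eq_mk]⟩
    · have : Ideal.Quotient.mkₐ ℂ segreIdeal (esymm (Fin 6) ℂ 3) = 0 := by
        rw [Ideal.Quotient.mkₐ_eq_mk, Ideal.Quotient.eq_zero_iff_mem]
        exact Ideal.subset_span (by simp)
      show Ideal.Quotient.mkₐ ℂ segreIdeal (esymm (Fin 6) ℂ 3) ∈ _
      rw [this]; exact Subalgebra.zero_mem _
    · exact Algebra.subset_adjoin ⟨1, by simp [eBar, Ideal.Quotient.mkₐ_eq_mk]⟩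
    · exact Algebra.subset_adjoin ⟨2, by simp [eBar, Ideal.Quotient.mkₐ_eq_mk]⟩
    · exact Algebra.subset_adjoin ⟨3, by simp [eBar, Ideal.Quotient.mkₐ_eq_mk]⟩
  rw [hr']
  have key : aeval (fun i : Fin 6 =>
      Ideal.Quotient.mkₐ ℂ segreIdeal (esymm (Fin 6) ℂ (i + 1))) F
      = (Algebra.adjoin ℂ (Set.range eBar)).val
        (aeval (fun i : Fin 6 =>
          (⟨Ideal.Quotient.mkₐ ℂ segreIdeal (esymm (Fin 6) ℂ (i + 1)), hg i⟩ :
            Algebra.adjoin ℂ (Set.range eBar))) F) := by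
    rw [comp_aeval_apply]; rfl
  rw [key]
  exact Subtype.mem _

open Polynomial in
lemma exists_point (a : Fin 4 → ℂ) :
    ∃ x : Fin 6 → ℂ,
      MvPolynomial.eval x (esymm (Fin 6) ℂ 1) = 0 ∧
      MvPolynomial.eval x (esymm (Fin 6) ℂ 3) = 0 ∧
      MvPolynomial.eval x (esymm (Fin 6) ℂ 2) = a 0 ∧
      MvPolynomial.eval x (esymm (Fin 6) ℂ 4) = a 1 ∧
      MvPolynomial.eval x (esymm (Fin 6) ℂ 5) = a 2 ∧
      MvPolynomial.eval x (esymm (Fin 6) ℂ 6) = a 3 := by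
  classical
  set p : Polynomial ℂ := Polynomial.C (a 0) * Polynomial.X ^ 4 + Polynomial.C (a 1) * Polynomial.X ^ 2 + Polynomial.C (a 2) * Polynomial.X + Polynomial.C (a 3) with hp
  have hpdeg : p.degree < 6 := by
    have : p.degree ≤ 4 := by rw [hp]; compute_degree
    exact lt_of_le_of_lt this (by decide)
  set Q : Polynomial ℂ := Polynomial.X ^ 6 + p with hQ
  have hmon : Q.Monic := monic_X_pow_add (by exact_mod_cast hpdeg)
  have hQdeg : Q.degree = 6 := by
    rw [hQ, degree_add_eq_left_of_degree_lt (by simp only [degree_X_pow]; exact_mod_cast hpdeg), degree_X_pow]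
    rfl
  have hdeg : Q.natDegree = 6 := natDegree_eq_of_degree_eq_some hQdeg
  have hsplits : Q.Splits := IsAlgClosed.splits Q
  have hcard : Multiset.card Q.roots = 6 := by
    rw [splits_iff_card_roots] at hsplits; rw [hsplits, hdeg]
  set s : Multiset ℂ := Q.roots.map (fun z => -z) with hs
  have hscard : Multiset.card s = 6 := by rw [hs, Multiset.card_map, hcard]
  have hsprod : (s.map fun r => Polynomial.X + Polynomial.C r).prod = Q := by
    rw [hs, Multiset.map_map]
    conv_rhs => rw [hsplits.eq_prod_roots_of_monic hmon]
    refine congrArg _ (Multiset.map_congr rfl fun z _ => ?_)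
    simp [sub_eq_add_neg]
  have hesymm : ∀ k, k ≤ 6 → s.esymm k = Q.coeff (6 - k) := by
    intro k hk
    have h6 : 6 - k ≤ Multiset.card s := by omega
    have := Multiset.prod_X_add_C_coeff s h6
    rw [hsprod] at this
    rw [this, hscard]
    congr 1
    omega
  have hlen : s.toList.length = 6 := by rw [Multiset.length_toList, hscard]
  set x : Fin 6 → ℂ := fun i => s.toList.get (Fin.cast hlen.symm i) with hx
  have huniv : (Finset.univ.val.map x) = s := by
    rw [Fin.univ_val_map]
    have h1 : List.ofFn x = s.toList := by
      apply List.ext_get (by simp [hlen])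
      intro n h1 h2
      rw [List.get_ofFn]
      rfl
    rw [h1, Multiset.coe_toList]
  have he : ∀ k, MvPolynomial.eval x (esymm (Fin 6) ℂ k) = s.esymm k := by
    intro k
    have h1 : MvPolynomial.aeval x (esymm (Fin 6) ℂ k)
        = (Finset.univ.val.map x).esymm k := aeval_esymm_eq_multiset_esymm (Fin 6) ℂ k x
    have h2 : MvPolynomial.aeval x (esymm (Fin 6) ℂ k)
        = MvPolynomial.eval x (esymm (Fin 6) ℂ k) := by
      rw [← MvPolynomial.coe_aeval_eq_eval]; rfl
    rw [← h2, h1, huniv]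
  have hcoeff : Q.coeff 5 = 0 ∧ Q.coeff 3 = 0 ∧ Q.coeff 4 = a 0 ∧ Q.coeff 2 = a 1
      ∧ Q.coeff 1 = a 2 ∧ Q.coeff 0 = a 3 := by
    refine ⟨?_, ?_, ?_, ?_, ?_, ?_⟩ <;>
      simp [hQ, hp, Polynomial.coeff_add, Polynomial.coeff_C_mul, Polynomial.coeff_X_pow, Polynomial.coeff_C, Polynomial.coeff_X]
  refine ⟨x, ?_, ?_, ?_, ?_, ?_, ?_⟩ <;>
    rw [he, hesymm _ (by norm_num)]
  · exact hcoeff.1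
  · exact hcoeff.2.1
  · exact hcoeff.2.2.1
  · exact hcoeff.2.2.2.1
  · exact hcoeff.2.2.2.2.1
  · exact hcoeff.2.2.2.2.2

lemma aeval_eq_eval' {n : ℕ} (x : Fin n → ℂ) (p : MvPolynomial (Fin n) ℂ) :
    MvPolynomial.aeval x p = MvPolynomial.eval x p := by
  rw [← MvPolynomial.coe_aeval_eq_eval]; rfl

lemma eBar_indep : AlgebraicIndependent ℂ eBar := by
  rw [algebraicIndependent_iff]
  intro P hP
  set E : Fin 4 → MvPolynomial (Fin 6) ℂ :=
    ![esymm (Fin 6) ℂ 2, esymm (Fin 6) ℂ 4, esymm (Fin 6) ℂ 5, esymm (Fin 6) ℂ 6] with hE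
  have hEB : Ideal.Quotient.mkₐ ℂ segreIdeal (aeval E P) = 0 := by
    rw [comp_aeval_apply]
    have he : (fun i => Ideal.Quotient.mkₐ ℂ segreIdeal (E i)) = eBar := by
      funext i; fin_cases i <;> simp [hE, eBar, Ideal.Quotient.mkₐ_eq_mk]
    rw [he]; exact hP
  have hmem : aeval E P ∈ segreIdeal := by
    rwa [Ideal.Quotient.mkₐ_eq_mk, Ideal.Quotient.eq_zero_iff_mem] at hEB
  rw [segreIdeal, Ideal.mem_span_pair] at hmem
  obtain ⟨u, v, huv⟩ := hmem
  refine MvPolynomial.funext (fun a => ?_)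
  rw [map_zero]
  obtain ⟨x, h1, h3, h2, h4, h5, h6⟩ := exists_point a
  have hx0 : MvPolynomial.eval x (aeval E P) = 0 := by
    rw [← huv, map_add, map_mul, map_mul, h1, h3, mul_zero, mul_zero, add_zero]
  have hcomp : MvPolynomial.aeval x (aeval E P)
      = MvPolynomial.aeval (fun i => MvPolynomial.aeval x (E i)) P :=
    comp_aeval_apply _ _ _
  have hEa : (fun i => MvPolynomial.aeval x (E i)) = a := by
    funext i
    fin_cases i
    · show MvPolynomial.aeval x (esymm (Fin 6) ℂ 2) = a 0
      rw [aeval_eq_eval', h2]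
    · show MvPolynomial.aeval x (esymm (Fin 6) ℂ 4) = a 1
      rw [aeval_eq_eval', h4]
    · show MvPolynomial.aeval x (esymm (Fin 6) ℂ 5) = a 2
      rw [aeval_eq_eval', h5]
    · show MvPolynomial.aeval x (esymm (Fin 6) ℂ 6) = a 3
      rw [aeval_eq_eval', h6]
  rw [← aeval_eq_eval', ← hEa, ← hcomp, aeval_eq_eval', hx0]

/-- `R^{S₆}` is the free polynomial algebra `ℂ[e₂, e₄, e₅, e₆]`. -/
theorem segre_invariants_free_polynomial_algebra :
    (∀ r : SegreRing, IsS6Invariant r ↔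
      r ∈ Algebra.adjoin ℂ (Set.range eBar)) ∧
    AlgebraicIndependent ℂ eBar := by
  refine ⟨fun r => ⟨mem_adjoin_of_invariant, fun hr π p hp => ?_⟩, eBar_indep⟩
  have := segrePerm_fixed_of_mem_adjoin π hr
  rw [← hp] at this ⊢
  rw [← segrePerm_mk]
  rw [hp] at this ⊢
  exact this
end
end
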